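/- Let s ∈ (3/4,1) and 2 < p < (3+2s)/(3−2s), with constant potential V ≡ 1. For every u ∈ M one has I(u) > (2s(p−2)/(6s−3))·(1/(p+1))∫_{ℝ³} |u|^{p+1} dx > 0; in particular I is strictly positive on M. -/

import Mathlib

open MeasureTheory Real Filter

noncomputable section

abbrev R3 := EuclideanSpace ℝ (Fin 3)

/-- The standard normalizing constant `C(3,s)` of the fractional Laplacian. -/
def fracC (s : ℝ) : ℝ :=
  (∫ z : R3, (1 - Real.cos (z 0)) / ‖z‖ ^ (3 + 2 * s))⁻¹

/-- The Gagliardo bilinear energy `E_s(u,v)`. -/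
def Es (s : ℝ) (u v : R3 → ℝ) : ℝ :=
  (fracC s / 2) *
    ∫ q : R3 × R3, (u q.1 - u q.2) * (v q.1 - v q.2) / ‖q.1 - q.2‖ ^ (3 + 2 * s)

/-- Finiteness of the Gagliardo seminorm. -/
def GagliardoFinite (s : ℝ) (u : R3 → ℝ) : Prop :=
  Integrable (fun q : R3 × R3 => (u q.1 - u q.2) ^ 2 / ‖q.1 - q.2‖ ^ (3 + 2 * s))

/-- Membership in the fractional Sobolev space `H^s(ℝ³)`. -/
def MemHs (s : ℝ) (u : R3 → ℝ) : Prop :=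
  MemLp u 2 volume ∧ GagliardoFinite s u

/-- The `H^s(ℝ³)` norm. -/
def HsNorm (s : ℝ) (u : R3 → ℝ) : ℝ :=
  Real.sqrt ((∫ x, u x ^ 2) + Es s u u)

/-- The constant `c_s` of the Riesz potential. -/
def rieszC (s : ℝ) : ℝ :=
  Real.pi ^ (-(3:ℝ)/2) * (2:ℝ) ^ (-(2*s)) * Real.Gamma (3 - 2*s) / Real.Gamma s

/-- The Riesz potential `φ_u` solving `(-Δ)^s φ = u²`. -/
def phiu (s : ℝ) (u : R3 → ℝ) (x : R3) : ℝ :=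
  rieszC s * ∫ y, u y ^ 2 / ‖x - y‖ ^ (3 - 2*s)

/-- The energy functional `I` with constant potential `V ≡ 1`. -/
def Ifun (s p : ℝ) (u : R3 → ℝ) : ℝ :=
  (1/2) * Es s u u + (1/2) * (∫ x, u x ^ 2)
    + (1/4) * (∫ x, phiu s u x * u x ^ 2) - (1/(p+1)) * ∫ x, |u x| ^ (p+1)

/-- The functional `G` defining the Pohozaev–Nehari manifold `M`. -/
def Gfun (s p : ℝ) (u : R3 → ℝ) : ℝ :=
  (6*s-3)/2 * Es s u u + (4*s-3)/2 * (∫ x, u x ^ 2)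
    + (6*s-3)/4 * (∫ x, phiu s u x * u x ^ 2)
    - (2*s*(p+1)-3)/(p+1) * ∫ x, |u x| ^ (p+1)

/-- Membership in the Pohozaev–Nehari manifold `M = {u ∈ H^s∖{0} : G(u) = 0}`. -/
def InM (s p : ℝ) (u : R3 → ℝ) : Prop :=
  MemHs s u ∧ ¬ (u =ᵐ[volume] 0) ∧ Gfun s p u = 0

/-- The scaling `u_θ(x) = θ^{2s} u(θ x)`. -/
def scaleHs (s : ℝ) (u : R3 → ℝ) (θ : ℝ) : R3 → ℝ :=
  fun x => θ ^ (2*s) * u (θ • x)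

/-- Lemma 3.2 (3): `I` is strictly positive on `M`; in fact
`I(u) > (2s(p-2)/(6s-3))·(1/(p+1))∫|u|^{p+1} > 0` for `u ∈ M`. -/
theorem I_positive_on_M (s p : ℝ) (hs : 3/4 < s ∧ s < 1)
    (hp : 2 < p ∧ p < (3 + 2*s)/(3 - 2*s))
    (u : R3 → ℝ) (hu : InM s p u) :
    (2*s*(p-2)/(6*s-3)) * ((1/(p+1)) * ∫ x, |u x| ^ (p+1)) < Ifun s p u ∧
    0 < (2*s*(p-2)/(6*s-3)) * ((1/(p+1)) * ∫ x, |u x| ^ (p+1)) := by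
  obtain ⟨hs1, hs2⟩ := hs
  obtain ⟨hp1, hp2⟩ := hp
  obtain ⟨⟨huL2, _⟩, hne, hG⟩ := hu
  set E := Es s u u with hE
  set A := (∫ x, u x ^ 2) with hA
  set B := (∫ x, phiu s u x * u x ^ 2) with hB
  set C := (∫ x, |u x| ^ (p + 1)) with hC
  have hp0 : (0:ℝ) < p + 1 := by linarith
  have h63 : (0:ℝ) < 6 * s - 3 := by linarith
  have h2s : (0:ℝ) < s := by linarith
  -- A > 0
  have hA0 : 0 < A := by
    have hint : Integrable (fun x => u x ^ 2) := huL2.integrable_sq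
    have hnn : 0 ≤ A := by
      rw [hA]; exact integral_nonneg fun x => sq_nonneg _
    rcases hnn.lt_or_eq with h | h
    · exact h
    · exfalso
      apply hne
      have hz := (integral_eq_zero_iff_of_nonneg (fun x => sq_nonneg (u x)) hint).mp h.symm
      filter_upwards [hz] with x hx
      have hx' : u x ^ 2 = 0 := hx
      simpa using sq_eq_zero_iff.mp hx'
  -- E ≥ 0
  have hE0 : 0 ≤ E := by
    rw [hE]
    unfold Es
    apply mul_nonneg
    · apply div_nonneg _ (by norm_num : (0:ℝ) ≤ 2)
      unfold fracC
      apply inv_nonneg.mpr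
      apply integral_nonneg
      intro z
      apply div_nonneg
      · have := Real.cos_le_one (z 0); linarith
      · positivity
    · apply integral_nonneg
      intro q
      apply div_nonneg (mul_self_nonneg _)
      positivity
  -- B ≥ 0
  have hB0 : 0 ≤ B := by
    rw [hB]
    apply integral_nonneg
    intro x
    apply mul_nonneg _ (sq_nonneg _)
    unfold phiu
    apply mul_nonneg
    · unfold rieszC
      apply div_nonneg _ (Real.Gamma_pos_of_pos h2s).le
      apply mul_nonneg (mul_nonneg (by positivity) (by positivity))
      exact (Real.Gamma_pos_of_pos (by linarith : (0:ℝ) < 3 - 2 * s)).le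
    · apply integral_nonneg
      intro y
      positivity
  -- unfold G(u) = 0
  have hGe : (6*s-3)/2 * E + (4*s-3)/2 * A + (6*s-3)/4 * B
      - (2*s*(p+1)-3)/(p+1) * C = 0 := by
    have h := hG
    unfold Gfun at h
    rw [← hE, ← hA, ← hB, ← hC] at h
    exact h
  -- C > 0
  have hC0 : 0 < C := by
    have t1 : 0 ≤ (6*s-3)/2 * E := mul_nonneg (by linarith) hE0
    have t2 : 0 < (4*s-3)/2 * A := mul_pos (by linarith) hA0
    have t3 : 0 ≤ (6*s-3)/4 * B := mul_nonneg (by linarith) hB0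
    have t4 : 0 < (2*s*(p+1)-3)/(p+1) * C := by linarith
    have hcoef : 0 < (2*s*(p+1)-3)/(p+1) := by
      apply div_pos _ hp0
      nlinarith [mul_pos (by linarith : (0:ℝ) < s - 3/4) (by linarith : (0:ℝ) < p - 2)]
    rcases mul_pos_iff.mp t4 with ⟨_, h⟩ | ⟨h, _⟩
    · exact h
    · linarith
  -- the key identity
  have hI : Ifun s p u = (1/2) * E + (1/2) * A + (1/4) * B - (1/(p+1)) * C := by
    unfold Ifun
    rw [← hE, ← hA, ← hB, ← hC]
  have key : (6*s-3) * Ifun s p u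
      = s * A + (2*s*(p-2)) * ((1/(p+1)) * C) := by
    rw [hI]
    linear_combination hGe
  have hTpos : 0 < (2*s*(p-2)/(6*s-3)) * ((1/(p+1)) * C) := by
    apply mul_pos
    · apply div_pos _ h63
      exact mul_pos (mul_pos (by norm_num) h2s) (by linarith)
    · exact mul_pos (by positivity) hC0
  constructor
  · rw [← mul_lt_mul_iff_right₀ h63, key]
    have hT : (6*s-3) * ((2*s*(p-2)/(6*s-3)) * ((1/(p+1)) * C))
        = (2*s*(p-2)) * ((1/(p+1)) * C) := by
      field_simp
    rw [hT]
    nlinarith [mul_pos h2s hA0]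
  · exact hTpos

end
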